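/- For any t > 2, the standard normal quantile satisfies √(max(2 log t − log log t − C, 0)) ≤ Φ⁻¹(1 − 1/t) ≤ √(2 log t − log log t), where C = 2 log 4 + log π. -/

import Mathlib

open MeasureTheory ProbabilityTheory Real Set Filter Topology

noncomputable def phi (y : ℝ) : ℝ := (Real.sqrt (2 * π))⁻¹ * Real.exp (-y ^ 2 / 2)

lemma phi_eq : gaussianPDFReal 0 1 = phi := by
  ext x
  simp [gaussianPDFReal, phi]

lemma phi_pos (y : ℝ) : 0 < phi y := by
  unfold phi
  positivity

lemma integrable_phi : Integrable phi := phi_eq ▸ integrable_gaussianPDFReal 0 1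

lemma integral_phi : ∫ y, phi y = 1 := by
  rw [← phi_eq]
  exact integral_gaussianPDFReal_eq_one 0 one_ne_zero

/-- The standard normal CDF. -/
noncomputable def Phi (y : ℝ) : ℝ := ((gaussianReal 0 1) (Set.Iic y)).toReal

/-- The standard normal quantile function (inverse CDF). -/
noncomputable def PhiInv : ℝ → ℝ := Function.invFun Phi

lemma Phi_eq (x : ℝ) : Phi x = ∫ y in Iic x, phi y := by
  rw [Phi, gaussianReal_apply_eq_integral 0 one_ne_zero, phi_eq,
    ENNReal.toReal_ofReal]
  exact setIntegral_nonneg measurableSet_Iic fun y _ => (phi_pos y).le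

lemma one_sub_Phi (x : ℝ) : 1 - Phi x = ∫ y in Ioi x, phi y := by
  have h := integral_add_compl (s := Iic x) measurableSet_Iic integrable_phi (f := phi)
  rw [compl_Iic, integral_phi] at h
  rw [Phi_eq]
  linarith

lemma Phi_sub (a b : ℝ) (hab : a ≤ b) : Phi b - Phi a = ∫ y in Ioc a b, phi y := by
  have hset : Iic b = Iic a ∪ Ioc a b := (Iic_union_Ioc_eq_Iic hab).symm
  have hd : Disjoint (Iic a) (Ioc a b) := by
    rw [disjoint_left]
    rintro y (hy : y ≤ a) ⟨h1, _⟩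
    exact absurd hy (not_le.2 h1)
  rw [Phi_eq, Phi_eq, hset, setIntegral_union hd measurableSet_Ioc
    integrable_phi.integrableOn integrable_phi.integrableOn]
  ring

lemma phi_le (y : ℝ) : phi y ≤ (Real.sqrt (2 * π))⁻¹ := by
  unfold phi
  have h1 : Real.exp (-y ^ 2 / 2) ≤ 1 :=
    Real.exp_le_one_iff.2 (by nlinarith [sq_nonneg y])
  have h2 : (0:ℝ) ≤ (Real.sqrt (2 * π))⁻¹ := by positivity
  calc (Real.sqrt (2 * π))⁻¹ * Real.exp (-y ^ 2 / 2) ≤ (Real.sqrt (2 * π))⁻¹ * 1 := by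
        exact mul_le_mul_of_nonneg_left h1 h2
    _ = (Real.sqrt (2 * π))⁻¹ := mul_one _

lemma Phi_sub_le (a b : ℝ) (hab : a ≤ b) :
    Phi b - Phi a ≤ (b - a) * (Real.sqrt (2 * π))⁻¹ := by
  rw [Phi_sub a b hab]
  calc ∫ y in Ioc a b, phi y ≤ ∫ _y in Ioc a b, (Real.sqrt (2 * π))⁻¹ := by
        apply setIntegral_mono_on integrable_phi.integrableOn
          (integrableOn_const measure_Ioc_lt_top.ne) measurableSet_Ioc
        exact fun y _ => phi_le y
    _ = (b - a) * (Real.sqrt (2 * π))⁻¹ := by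
        rw [setIntegral_const, Real.volume_real_Ioc, smul_eq_mul,
          max_eq_left (by linarith)]

lemma Phi_strictMono : StrictMono Phi := by
  intro a b hab
  have h : 0 < ∫ y in Ioc a b, phi y := by
    rw [← intervalIntegral.integral_of_le hab.le]
    exact intervalIntegral.intervalIntegral_pos_of_pos_on
      integrable_phi.intervalIntegrable (fun y _ => phi_pos y) hab
  have := Phi_sub a b hab.le
  linarith

lemma Phi_mono : Monotone Phi := Phi_strictMono.monotone

lemma Phi_lipschitz : ∀ a b : ℝ, |Phi b - Phi a| ≤ |b - a| * (Real.sqrt (2 * π))⁻¹ := by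
  have key : ∀ a b : ℝ, a ≤ b → |Phi b - Phi a| ≤ |b - a| * (Real.sqrt (2 * π))⁻¹ := by
    intro a b hab
    rw [abs_of_nonneg (by linarith [Phi_mono hab]), abs_of_nonneg (by linarith)]
    exact Phi_sub_le a b hab
  intro a b
  rcases le_total a b with h | h
  · exact key a b h
  · rw [← abs_neg (Phi b - Phi a), ← abs_neg (b - a)]
    simpa using key b a h

lemma Phi_continuous : Continuous Phi := by
  rw [Metric.continuous_iff]
  intro x ε hε
  refine ⟨ε * Real.sqrt (2 * π), by positivity, fun y hy => ?_⟩
  have h2 : (1:ℝ) < Real.sqrt (2 * π) := by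
    rw [show (1:ℝ) = Real.sqrt 1 by simp]
    exact Real.sqrt_lt_sqrt zero_le_one (by nlinarith [Real.pi_gt_three])
  calc dist (Phi y) (Phi x) = |Phi y - Phi x| := Real.dist_eq _ _
    _ ≤ |y - x| * (Real.sqrt (2 * π))⁻¹ := Phi_lipschitz x y
    _ < ε * Real.sqrt (2 * π) * (Real.sqrt (2 * π))⁻¹ := by
        apply mul_lt_mul_of_pos_right _ (by positivity)
        rw [← Real.dist_eq]; exact hy
    _ = ε := by field_simp

lemma Phi_zero : Phi 0 = 1 / 2 := by
  have hsymm : ∫ y in Ioi (0:ℝ), phi y = ∫ y in Iic (0:ℝ), phi y := by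
    have : ∀ y : ℝ, phi (-y) = phi y := fun y => by unfold phi; ring_nf
    rw [show (Iic (0:ℝ)) = Iic (-(0:ℝ)) by norm_num, ← integral_comp_neg_Ioi]
    simp only [this]
  have h := one_sub_Phi 0
  rw [hsymm, ← Phi_eq] at h
  linarith

lemma phi_hasDerivAt (y : ℝ) : HasDerivAt phi (-y * phi y) y := by
  have h1 : HasDerivAt (fun y : ℝ => -y ^ 2 / 2) (-y) y := by
    have := ((hasDerivAt_pow 2 y).neg).div_const 2
    simpa using this.congr_deriv (by ring)
  have h2 := h1.exp
  have h3 := h2.const_mul (Real.sqrt (2 * π))⁻¹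
  unfold phi
  exact h3.congr_deriv (by ring)

lemma phi_tendsto_zero : Tendsto phi atTop (𝓝 0) := by
  unfold phi
  rw [show (0:ℝ) = (Real.sqrt (2 * π))⁻¹ * 0 by ring]
  apply Tendsto.const_mul
  apply Real.tendsto_exp_atBot.comp
  have h : Tendsto (fun y : ℝ => y ^ 2) atTop atTop := tendsto_pow_atTop two_ne_zero
  have h2 : Tendsto (fun y : ℝ => -y ^ 2) atTop atBot := tendsto_neg_atTop_atBot.comp h
  exact h2.atBot_div_const two_pos


lemma tail_ub (x : ℝ) (hx : 0 < x) : (∫ y in Ioi x, phi y) ≤ phi x / x := by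
  have hderiv : ∀ y ∈ Ici x, HasDerivAt (fun z => -phi z) (y * phi y) y := by
    intro y _
    exact (phi_hasDerivAt y).neg.congr_deriv (by ring)
  have hpos : ∀ y ∈ Ioi x, 0 ≤ y * phi y := fun y hy =>
    mul_nonneg (le_of_lt (lt_trans hx hy)) (phi_pos y).le
  have hlim : Tendsto (fun z => -phi z) atTop (𝓝 (0:ℝ)) := by
    simpa using phi_tendsto_zero.neg
  have hint : ∫ y in Ioi x, y * phi y = phi x := by
    rw [integral_Ioi_of_hasDerivAt_of_nonneg' hderiv hpos hlim]; ring
  have hIOn : IntegrableOn (fun y => y * phi y) (Ioi x) :=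
    integrableOn_Ioi_deriv_of_nonneg' hderiv hpos hlim
  have hmono : (∫ y in Ioi x, phi y) ≤ ∫ y in Ioi x, y * phi y / x := by
    apply setIntegral_mono_on integrable_phi.integrableOn (hIOn.div_const x)
      measurableSet_Ioi
    intro y hy
    rw [le_div_iff₀ hx]
    have := mul_le_mul_of_nonneg_right (le_of_lt (show x < y from hy)) (phi_pos y).le
    nlinarith [phi_pos y]
  calc (∫ y in Ioi x, phi y) ≤ ∫ y in Ioi x, y * phi y / x := hmono
    _ = (∫ y in Ioi x, y * phi y) / x := by rw [integral_div]
    _ = phi x / x := by rw [hint]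

lemma tail_lb (x : ℝ) (hx : 1 ≤ x) :
    x / (1 + x ^ 2) * phi x ≤ ∫ y in Ioi x, phi y := by
  set D : ℝ → ℝ := fun y => (y ^ 4 + 2 * y ^ 2 - 1) / (1 + y ^ 2) ^ 2 * phi y with hD
  have hderiv : ∀ y ∈ Ici x, HasDerivAt (fun z => -(z / (1 + z ^ 2) * phi z)) (D y) y := by
    intro y _
    have hden : HasDerivAt (fun z : ℝ => 1 + z ^ 2) (2 * y) y := by
      simpa using (hasDerivAt_pow 2 y).const_add 1
    have hne : (1 : ℝ) + y ^ 2 ≠ 0 := by positivity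
    have hq := (hasDerivAt_id y).div hden hne
    have hmul := hq.mul (phi_hasDerivAt y)
    apply hmul.neg.congr_deriv
    rw [hD]
    simp only [Pi.div_apply, id]
    field_simp
    ring
  have hpos : ∀ y ∈ Ioi x, 0 ≤ D y := by
    intro y hy
    have h1 : (1:ℝ) < y := lt_of_le_of_lt hx hy
    have : (0:ℝ) ≤ y ^ 4 + 2 * y ^ 2 - 1 := by nlinarith
    exact mul_nonneg (div_nonneg this (by positivity)) (phi_pos y).le
  have hlim : Tendsto (fun z => -(z / (1 + z ^ 2) * phi z)) atTop (𝓝 (0:ℝ)) := by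
    rw [show (0:ℝ) = -0 by ring]
    apply Tendsto.neg
    apply squeeze_zero_norm' _ phi_tendsto_zero
    filter_upwards [eventually_ge_atTop (0:ℝ)] with z hz
    rw [Real.norm_eq_abs, abs_of_nonneg (mul_nonneg (by positivity) (phi_pos z).le)]
    have h2 : z / (1 + z ^ 2) ≤ 1 := by
      rw [div_le_one (by positivity)]; nlinarith
    nth_rewrite 2 [show phi z = 1 * phi z by ring]
    exact mul_le_mul_of_nonneg_right h2 (phi_pos z).le
  have hint : ∫ y in Ioi x, D y = x / (1 + x ^ 2) * phi x := by
    rw [integral_Ioi_of_hasDerivAt_of_nonneg' hderiv hpos hlim]; ring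
  have hIOn : IntegrableOn D (Ioi x) :=
    integrableOn_Ioi_deriv_of_nonneg' hderiv hpos hlim
  rw [← hint]
  apply setIntegral_mono_on hIOn integrable_phi.integrableOn measurableSet_Ioi
  intro y _
  show (y ^ 4 + 2 * y ^ 2 - 1) / (1 + y ^ 2) ^ 2 * phi y ≤ phi y
  nth_rewrite 2 [show phi y = 1 * phi y by ring]
  apply mul_le_mul_of_nonneg_right _ (phi_pos y).le
  rw [div_le_one (by positivity)]
  nlinarith [sq_nonneg y]


lemma Phi_tendsto_one : Tendsto Phi atTop (𝓝 1) := by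
  have h := tendsto_measure_Iic_atTop (gaussianReal 0 1)
  have huniv : (gaussianReal 0 1) univ = 1 := measure_univ
  rw [huniv] at h
  have h2 := (ENNReal.tendsto_toReal ENNReal.one_ne_top).comp h
  simp only [Function.comp_def, ENNReal.toReal_one] at h2
  exact h2

lemma Phi_lt_one (x : ℝ) : Phi x < 1 := by
  have h := one_sub_Phi x
  have hpos : 0 < ∫ y in Ioi x, phi y := by
    have h2 := tail_lb (max x 1) (le_max_right x 1)
    have h3 : 0 < max x 1 / (1 + (max x 1) ^ 2) * phi (max x 1) := by
      have h5 : (0:ℝ) < max x 1 := lt_of_lt_of_le one_pos (le_max_right x 1)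
      have := phi_pos (max x 1)
      positivity
    have h4 : (∫ y in Ioi (max x 1), phi y) ≤ ∫ y in Ioi x, phi y := by
      apply setIntegral_mono_set integrable_phi.integrableOn
        (ae_of_all _ fun y => (phi_pos y).le)
      exact HasSubset.Subset.eventuallyLE (Ioi_subset_Ioi (le_max_left x 1))
    linarith
  linarith

lemma exists_Phi_eq {p : ℝ} (hp0 : 1 / 2 ≤ p) (hp1 : p < 1) : ∃ x, Phi x = p := by
  have h1 : ∀ᶠ b in atTop, p < Phi b := Phi_tendsto_one.eventually_const_lt hp1
  obtain ⟨b, hb⟩ := h1.exists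
  have h2 : p ∈ Icc (Phi 0) (Phi b) := ⟨by rwa [Phi_zero], hb.le⟩
  have h3 := intermediate_value_univ (0:ℝ) b Phi_continuous h2
  exact h3

lemma mono2slog (a b : ℝ) (ha : 1/2 ≤ a) (hab : a ≤ b) :
    2*a - Real.log a ≤ 2*b - Real.log b := by
  have h0 : 0 < a := by linarith
  have h0b : 0 < b := by linarith
  have h1 : Real.log b - Real.log a ≤ (b-a)/a := by
    rw [← Real.log_div (ne_of_gt h0b) (ne_of_gt h0)]
    have h2 := Real.log_le_sub_one_of_pos (show 0 < b/a by positivity)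
    calc Real.log (b/a) ≤ b/a - 1 := h2
      _ = (b-a)/a := by field_simp
  have h2 : (b-a)/a ≤ 2*(b-a) := by
    rw [div_le_iff₀ h0]; nlinarith
  linarith

lemma exp_4720_gt : (10:ℝ) < Real.exp (47/20) := by
  have h : (10:ℝ)^(20:ℕ) < (Real.exp (47/20))^(20:ℕ) := by
    calc (10:ℝ)^(20:ℕ) < 2.7182818283^(47:ℕ) := by norm_num
      _ ≤ (Real.exp 1)^(47:ℕ) := pow_le_pow_left₀ (by norm_num) Real.exp_one_gt_d9.le 47
      _ = Real.exp 47 := by rw [← Real.exp_nat_mul]; norm_num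
      _ = (Real.exp (47/20))^(20:ℕ) := by rw [← Real.exp_nat_mul]; norm_num
  exact lt_of_pow_lt_pow_left₀ 20 (Real.exp_pos _).le h

lemma exp_4710_lt : Real.exp (47/10) < 117 := by
  have h : (Real.exp (47/10))^(10:ℕ) < (117:ℝ)^(10:ℕ) := by
    calc (Real.exp (47/10))^(10:ℕ) = Real.exp 47 := by rw [← Real.exp_nat_mul]; norm_num
      _ = (Real.exp 1)^(47:ℕ) := by rw [← Real.exp_nat_mul]; norm_num
      _ ≤ 2.7182818286^(47:ℕ) := pow_le_pow_left₀ (Real.exp_pos _).le Real.exp_one_lt_d9.le 47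
      _ < (117:ℝ)^(10:ℕ) := by norm_num
  exact lt_of_pow_lt_pow_left₀ 10 (by norm_num) h

lemma numeric_key : 2*(47/20 : ℝ) - Real.log (47/20) < Real.log (16*π) := by
  have hπ : 3.141592 < π := Real.pi_gt_d6
  have h1 : Real.exp (47/10) < 16*π*(47/20) := by nlinarith [exp_4710_lt]
  have h2 : (47/10 : ℝ) < Real.log (16*π*(47/20)) :=
    (Real.lt_log_iff_exp_lt (by nlinarith)).2 h1
  rw [Real.log_mul (by positivity) (by norm_num)] at h2
  have h3 : 0 < Real.log (47/20) := Real.log_pos (by norm_num)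
  linarith

lemma PhiInv_Phi (x : ℝ) : PhiInv (Phi x) = x :=
  Function.leftInverse_invFun Phi_strictMono.injective x

set_option maxHeartbeats 2000000 in
/-- For any `t > 2`,
`√(max(2 log t − log log t − C, 0)) ≤ Φ⁻¹(1 − 1/t) ≤ √(2 log t − log log t)`,
where `C = 2 log 4 + log π`. -/
theorem quantile_bound (t : ℝ) (ht : 2 < t) :
    Real.sqrt (max (2 * Real.log t - Real.log (Real.log t)
        - (2 * Real.log 4 + Real.log Real.pi)) 0) ≤ PhiInv (1 - 1 / t) ∧
    PhiInv (1 - 1 / t) ≤ Real.sqrt (2 * Real.log t - Real.log (Real.log t)) := by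
  have ht0 : (0:ℝ) < t := by linarith
  set s := Real.log t with hs
  have hslog2 : Real.log 2 < s := Real.log_lt_log two_pos ht
  have hs12 : (1:ℝ)/2 < s := by
    have := Real.log_two_gt_d9; linarith
  have hspos : 0 < s := by linarith
  have hlogs : Real.log s ≤ s - 1 := Real.log_le_sub_one_of_pos hspos
  have hA : 0 < 2*s - Real.log s := by linarith
  set u := Real.sqrt (2*s - Real.log s) with hu
  have hu0 : 0 < u := Real.sqrt_pos.2 hA
  have hu2 : u^2 = 2*s - Real.log s := Real.sq_sqrt hA.le
  -- the target probability
  have hp1 : 1 - 1/t < 1 := by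
    have : 0 < 1/t := by positivity
    linarith
  have hp0 : 1/2 ≤ 1 - 1/t := by
    have : 1/t < 1/2 := by rw [div_lt_div_iff₀ ht0 (by norm_num)]; linarith
    linarith
  obtain ⟨x₀, hx₀⟩ := exists_Phi_eq hp0 hp1
  have hinv : PhiInv (1 - 1/t) = x₀ := by rw [← hx₀, PhiInv_Phi]
  -- exp computations
  have hes : Real.exp (-s) = 1/t := by
    rw [Real.exp_neg, hs, Real.exp_log ht0]; ring
  have hsqrt_s : Real.exp (Real.log s / 2) = Real.sqrt s := by
    rw [Real.sqrt_eq_rpow, Real.rpow_def_of_pos hspos]; ring_nf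
  -- upper bound
  have hQu : (∫ y in Ioi u, phi y) ≤ phi u / u := tail_ub u hu0
  have hphiu : phi u = (Real.sqrt (2*π))⁻¹ * (Real.sqrt s / t) := by
    unfold phi
    rw [hu2, show -(2*s - Real.log s)/2 = -s + Real.log s / 2 by ring,
      Real.exp_add, hes, hsqrt_s]
    ring
  have hπ3 : (3:ℝ) < π := Real.pi_gt_three
  have hub : phi u / u ≤ 1/t := by
    have h1 : Real.sqrt s ≤ Real.sqrt (2*π) * u := by
      rw [hu, ← Real.sqrt_mul (by positivity)]
      apply Real.sqrt_le_sqrt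
      nlinarith
    rw [hphiu, div_le_div_iff₀ hu0 ht0]
    have h2 : (0:ℝ) < Real.sqrt (2*π) := by positivity
    have h3 : (Real.sqrt (2*π))⁻¹ * Real.sqrt s ≤ u := by
      rw [inv_mul_le_iff₀ h2]; linarith
    calc (Real.sqrt (2*π))⁻¹ * (Real.sqrt s / t) * t
        = (Real.sqrt (2*π))⁻¹ * Real.sqrt s := by field_simp
      _ ≤ u := h3
      _ = 1 * u := (one_mul u).symm
  have hPhiu : 1 - 1/t ≤ Phi u := by
    have := one_sub_Phi u
    linarith [le_trans (by linarith [one_sub_Phi u] : 1 - Phi u ≤ phi u / u) hub]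
  have hupper : x₀ ≤ u := Phi_strictMono.le_iff_le.1 (by rw [hx₀]; exact hPhiu)
  -- rewrite constant
  have hC : 2 * Real.log 4 + Real.log π = Real.log (16*π) := by
    rw [Real.log_mul (by norm_num) (ne_of_gt Real.pi_pos),
      show (16:ℝ) = 4^2 by norm_num, Real.log_pow]
    push_cast; ring
  constructor
  · -- lower bound
    rw [hC, hinv]
    rcases le_or_gt (2*s - Real.log s - Real.log (16*π)) 0 with hL | hL
    · rw [max_eq_right hL, Real.sqrt_zero]
      have h0 : Phi 0 ≤ Phi x₀ := by rw [hx₀, Phi_zero]; exact hp0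
      exact (Phi_strictMono.le_iff_le.1 h0)
    · rw [max_eq_left hL.le]
      set l := Real.sqrt (2*s - Real.log s - Real.log (16*π)) with hl
      have hl2 : l^2 = 2*s - Real.log s - Real.log (16*π) := Real.sq_sqrt hL.le
      have hl0 : 0 < l := Real.sqrt_pos.2 hL
      -- t > 10
      have hs235 : 47/20 < s := by
        by_contra hcon
        push_neg at hcon
        have hm := mono2slog s (47/20) hs12.le hcon
        have := numeric_key
        linarith
      have ht10 : (10:ℝ) < t := by
        have h := Real.exp_lt_exp.2 hs235
        rw [hs, Real.exp_log ht0] at h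
        linarith [exp_4720_gt]
      -- goal: l ≤ x₀ ⟸ Phi l ≤ 1 - 1/t
      suffices hPl : Phi l ≤ 1 - 1/t by
        exact Phi_strictMono.le_iff_le.1 (by rw [hx₀]; exact hPl)
      rcases le_or_gt l 1 with hl1 | hl1
      · -- small case
        have hlin := Phi_sub_le 0 l hl0.le
        rw [Phi_zero] at hlin
        have hsq : (Real.sqrt (2*π))⁻¹ ≤ 2/5 := by
          rw [inv_le_iff_one_le_mul₀' (by positivity)]
          have : (5/2:ℝ) ≤ Real.sqrt (2*π) := by
            rw [show (5/2:ℝ) = Real.sqrt ((5/2)^2) by rw [Real.sqrt_sq]; norm_num]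
            apply Real.sqrt_le_sqrt; nlinarith [Real.pi_gt_d6]
          linarith
        have h1t : 1/t < 1/10 := by rw [div_lt_div_iff₀ ht0 (by norm_num)]; linarith
        have : Phi l ≤ 1/2 + l * (Real.sqrt (2*π))⁻¹ := by linarith
        have h2 : l * (Real.sqrt (2*π))⁻¹ ≤ 2/5 := by
          calc l * (Real.sqrt (2*π))⁻¹ ≤ 1 * (2/5) :=
            mul_le_mul hl1 hsq (by positivity) one_pos.le
          _ = 2/5 := by ring
        linarith
      · -- large case
        have hQl := tail_lb l hl1.le
        have hsqrt16 : Real.exp (Real.log (16*π) / 2) = Real.sqrt (16*π) := by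
          rw [Real.sqrt_eq_rpow, Real.rpow_def_of_pos (by positivity)]; ring_nf
        have hphil : phi l = (Real.sqrt (2*π))⁻¹ * (Real.sqrt s * Real.sqrt (16*π) / t) := by
          unfold phi
          rw [hl2, show -(2*s - Real.log s - Real.log (16*π))/2
              = -s + Real.log s / 2 + Real.log (16*π) / 2 by ring,
            Real.exp_add, Real.exp_add, hes, hsqrt_s, hsqrt16]
          ring
        have hphil2 : phi l = 2 * Real.sqrt 2 * Real.sqrt s / t := by
          rw [hphil, show (16:ℝ)*π = 8 * (2*π) by ring,
            Real.sqrt_mul (by norm_num) (2*π),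
            show (8:ℝ) = (2*Real.sqrt 2)^2 by
              rw [mul_pow, Real.sq_sqrt (by norm_num : (0:ℝ) ≤ 2)]; norm_num,
            Real.sqrt_sq (by positivity)]
          have h2π : (0:ℝ) < Real.sqrt (2*π) := by positivity
          field_simp
        -- l ≤ √(2s)
        have hlog16 : (0:ℝ) ≤ Real.log s + Real.log (16*π) := by
          have ha : -Real.log 2 < Real.log s := by
            rw [← Real.log_inv]
            exact Real.log_lt_log (by norm_num) (by norm_num; linarith)
          have hb : Real.log 2 < Real.log (16*π) :=
            Real.log_lt_log (by norm_num) (by nlinarith [Real.pi_gt_three])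
          linarith
        have hl2s : l ≤ Real.sqrt 2 * Real.sqrt s := by
          rw [← Real.sqrt_mul (by norm_num)]
          apply Real.sqrt_le_sqrt
          linarith
        -- conclude 1/t ≤ Q l
        have hkey : 1/t ≤ l / (1 + l^2) * phi l := by
          rw [hphil2, div_mul_div_comm, le_div_iff₀ (by positivity)]
          have expand : 1/t * ((1 + l^2) * t) = 1 + l^2 := by field_simp
          rw [expand]
          have h2 : l * l ≤ l * (Real.sqrt 2 * Real.sqrt s) :=
            mul_le_mul_of_nonneg_left hl2s hl0.le
          nlinarith [hl1, h2]
        have hQ := one_sub_Phi l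
        linarith [le_trans hkey hQl]
  · -- upper bound
    rw [hinv]
    exact hupper
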